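/- For any T ∈ [0,1], S ∈ (0,1], and n ≥ 2 satisfying T/n ≤ S ≤ (T+1)/2, there exist unit vectors ψ, φ ∈ ℂ^n and mutually orthogonal projections Π_1,...,Π_n with sum_k Π_k = 1 such that |⟨φ,ψ⟩|² = T and sum_j |⟨φ,Π_j ψ⟩|² = S. -/

import Mathlib

open scoped InnerProductSpace

/-- rank-one projection onto the `k`-th standard basis vector -/
noncomputable def myPr (n : ℕ) (k : Fin n) :
    EuclideanSpace ℂ (Fin n) →ₗ[ℂ] EuclideanSpace ℂ (Fin n) where
  toFun x := WithLp.toLp 2 (fun j => if j = k then x j else 0)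
  map_add' x y := by ext j; by_cases h : j = k <;> simp [h]
  map_smul' c x := by ext j; by_cases h : j = k <;> simp [h]

lemma sum_two {n : ℕ} (i0 i1 : Fin n) (h01 : i0 ≠ i1) (A B : ℝ) :
    ∑ j : Fin n, (if j = i0 then A else if j = i1 then B else 0) = A + B := by
  have h : ∀ j : Fin n, (if j = i0 then A else if j = i1 then B else 0)
      = (if j = i0 then A else 0) + (if j = i1 then B else 0) := by
    intro j
    by_cases h0 : j = i0 <;> by_cases h1 : j = i1 <;> simp_all [h0, h1]
  simp only [h]
  rw [Finset.sum_add_distrib, Finset.sum_ite_eq' Finset.univ i0 (fun _ => A),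
    Finset.sum_ite_eq' Finset.univ i1 (fun _ => B)]
  simp

lemma sum_unif {n : ℕ} (i0 : Fin n) (A B : ℝ) :
    ∑ j : Fin n, (if j = i0 then A else B) = A + ((n : ℝ) - 1) * B := by
  have h : ∀ j : Fin n, (if j = i0 then A else B)
      = (if j = i0 then A - B else 0) + B := by
    intro j; by_cases h0 : j = i0 <;> simp [h0]
  simp only [h]
  rw [Finset.sum_add_distrib, Finset.sum_ite_eq' Finset.univ i0 (fun _ => A - B)]
  simp [Finset.card_univ, mul_comm]
  ring

lemma trig_pair (t g : ℝ) (ht1 : -1 ≤ t) (ht2 : t ≤ 1) (hg1 : -1 ≤ g) (hg2 : g ≤ 1) :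
    ∃ ca sa cb sb : ℝ, ca ^ 2 + sa ^ 2 = 1 ∧ cb ^ 2 + sb ^ 2 = 1 ∧
      cb * ca + sb * sa = t ∧ cb * ca - sb * sa = g := by
  refine ⟨Real.cos ((Real.arccos t + Real.arccos g) / 2),
    Real.sin ((Real.arccos t + Real.arccos g) / 2),
    Real.cos ((Real.arccos g - Real.arccos t) / 2),
    Real.sin ((Real.arccos g - Real.arccos t) / 2),
    Real.cos_sq_add_sin_sq _, Real.cos_sq_add_sin_sq _, ?_, ?_⟩
  · rw [show ∀ a b : ℝ, Real.cos b * Real.cos a + Real.sin b * Real.sin a = Real.cos (a - b)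
      from fun a b => by rw [Real.cos_sub]; ring]
    rw [show (Real.arccos t + Real.arccos g) / 2 - (Real.arccos g - Real.arccos t) / 2
      = Real.arccos t by ring]
    exact Real.cos_arccos ht1 ht2
  · rw [show ∀ a b : ℝ, Real.cos b * Real.cos a - Real.sin b * Real.sin a = Real.cos (a + b)
      from fun a b => by rw [Real.cos_add]; ring]
    rw [show (Real.arccos t + Real.arccos g) / 2 + (Real.arccos g - Real.arccos t) / 2
      = Real.arccos g by ring]
    exact Real.cos_arccos hg1 hg2

lemma algB (nR t e S T P Q : ℝ) (hn0 : nR ≠ 0) (hn1 : nR - 1 ≠ 0)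
    (ht2 : t ^ 2 = T) (he2 : e ^ 2 = (nR - 1) * (nR * S - T))
    (h1 : P + Q = t) (h2 : P - Q = (2 * e - (nR - 2) * t) / nR) :
    P ^ 2 + Q ^ 2 / (nR - 1) = S := by
  have hp : P = (t + (2 * e - (nR - 2) * t) / nR) / 2 := by linarith
  have hq : Q = (t - (2 * e - (nR - 2) * t) / nR) / 2 := by linarith
  have hnp : nR * P = t + e := by rw [hp]; field_simp; ring
  have hnq : nR * Q = (nR - 1) * t - e := by rw [hq]; field_simp; ring
  have hfrac : P ^ 2 + Q ^ 2 / (nR - 1) - S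
      = ((nR - 1) * (nR * P) ^ 2 + (nR * Q) ^ 2 - nR ^ 2 * (nR - 1) * S)
        / (nR ^ 2 * (nR - 1)) := by
    field_simp
  have hnum : (nR - 1) * (nR * P) ^ 2 + (nR * Q) ^ 2 - nR ^ 2 * (nR - 1) * S = 0 := by
    rw [hnp, hnq]
    linear_combination (nR * (nR - 1)) * ht2 + nR * he2
  rw [hnum] at hfrac
  simp at hfrac
  linarith

lemma master (n : ℕ) (T S : ℝ) (ψr φr : Fin n → ℝ)
    (hψ : ∑ j, ψr j ^ 2 = 1) (hφ : ∑ j, φr j ^ 2 = 1)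
    (hT : (∑ j, φr j * ψr j) ^ 2 = T)
    (hS : ∑ j, (φr j * ψr j) ^ 2 = S) :
    ∃ (ψ φ : EuclideanSpace ℂ (Fin n))
      (Pr : Fin n → EuclideanSpace ℂ (Fin n) →ₗ[ℂ] EuclideanSpace ℂ (Fin n)),
      ‖ψ‖ = 1 ∧ ‖φ‖ = 1 ∧
      (∀ k, (Pr k).IsSymmetric) ∧ (∀ k, Pr k ∘ₗ Pr k = Pr k) ∧
      (∀ j k, j ≠ k → Pr j ∘ₗ Pr k = 0) ∧ (∑ k, Pr k = LinearMap.id) ∧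
      ‖⟪φ, ψ⟫_ℂ‖ ^ 2 = T ∧
      (∑ j, ‖⟪φ, Pr j ψ⟫_ℂ‖ ^ 2) = S := by
  set ψ : EuclideanSpace ℂ (Fin n) := WithLp.toLp 2 (fun j => (ψr j : ℂ)) with hψdef
  set φ : EuclideanSpace ℂ (Fin n) := WithLp.toLp 2 (fun j => (φr j : ℂ)) with hφdef
  refine ⟨ψ, φ, myPr n, ?_, ?_, ?_, ?_, ?_, ?_, ?_, ?_⟩
  · rw [EuclideanSpace.norm_eq]
    simp only [hψdef, Complex.norm_real, Real.norm_eq_abs, sq_abs, hψ, Real.sqrt_one]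
  · rw [EuclideanSpace.norm_eq]
    simp only [hφdef, Complex.norm_real, Real.norm_eq_abs, sq_abs, hφ, Real.sqrt_one]
  · intro k x y
    simp [myPr, PiLp.inner_apply, apply_ite, mul_comm]
  · intro k; ext x j; by_cases h : j = k <;> simp [myPr, h]
  · intro j k h; ext x i
    by_cases h1 : i = j <;> by_cases h2 : i = k <;> simp_all [myPr]
  · ext x j
    rw [LinearMap.sum_apply]
    rw [show (∑ k, myPr n k x) j = ∑ k, (myPr n k x) j from by rw [WithLp.ofLp_sum]; exact Finset.sum_apply j Finset.univ _]
    simp [myPr]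
  · have h1 : ⟪φ, ψ⟫_ℂ = ((∑ j, φr j * ψr j : ℝ) : ℂ) := by
      simp [PiLp.inner_apply, hψdef, hφdef, mul_comm]
    rw [h1, Complex.norm_real, Real.norm_eq_abs, sq_abs, hT]
  · have h1 : ∀ j : Fin n, ⟪φ, myPr n j ψ⟫_ℂ = ((φr j * ψr j : ℝ) : ℂ) := by
      intro j
      simp [myPr, PiLp.inner_apply, apply_ite, hψdef, hφdef, mul_comm]
    simp_rw [h1, Complex.norm_real, Real.norm_eq_abs, sq_abs]
    exact hS

set_option maxHeartbeats 1600000 in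
theorem stmt_13 (n : ℕ) (hn : 2 ≤ n) (T S : ℝ) (hT0 : 0 ≤ T) (hT1 : T ≤ 1)
    (hS0 : 0 < S) (hS1 : S ≤ 1) (hlow : T / n ≤ S) (hhigh : S ≤ (T + 1) / 2) :
    ∃ (ψ φ : EuclideanSpace ℂ (Fin n))
      (Pr : Fin n → EuclideanSpace ℂ (Fin n) →ₗ[ℂ] EuclideanSpace ℂ (Fin n)),
      ‖ψ‖ = 1 ∧ ‖φ‖ = 1 ∧
      (∀ k, (Pr k).IsSymmetric) ∧ (∀ k, Pr k ∘ₗ Pr k = Pr k) ∧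
      (∀ j k, j ≠ k → Pr j ∘ₗ Pr k = 0) ∧ (∑ k, Pr k = LinearMap.id) ∧
      ‖⟪φ, ψ⟫_ℂ‖ ^ 2 = T ∧
      (∑ j, ‖⟪φ, Pr j ψ⟫_ℂ‖ ^ 2) = S := by
  obtain ⟨t, ht0, ht1, ht2⟩ : ∃ t : ℝ, 0 ≤ t ∧ t ≤ 1 ∧ t ^ 2 = T :=
    ⟨Real.sqrt T, Real.sqrt_nonneg _, Real.sqrt_le_one.mpr hT1, Real.sq_sqrt hT0⟩
  by_cases hc : T ≤ 2 * S
  · -- two-coordinate construction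
    set i0 : Fin n := ⟨0, by omega⟩ with hi0
    set i1 : Fin n := ⟨1, by omega⟩ with hi1
    have h01 : i0 ≠ i1 := by simp [hi0, hi1, Fin.ext_iff]
    have h2ST : 0 ≤ 2 * S - T := by linarith
    have hST1 : 2 * S - T ≤ 1 := by linarith
    obtain ⟨g, hg0, hg1, hg2⟩ : ∃ g : ℝ, 0 ≤ g ∧ g ≤ 1 ∧ g ^ 2 = 2 * S - T :=
      ⟨Real.sqrt _, Real.sqrt_nonneg _, Real.sqrt_le_one.mpr hST1, Real.sq_sqrt h2ST⟩
    obtain ⟨ca, sa, cb, sb, ha, hb, hT', hG'⟩ :=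
      trig_pair t g (by linarith) ht1 (by linarith) hg1
    refine master n T S
      (fun j => if j = i0 then ca else if j = i1 then sa else 0)
      (fun j => if j = i0 then cb else if j = i1 then sb else 0)
      ?_ ?_ ?_ ?_
    · have h1 : (∑ j : Fin n, (if j = i0 then ca else if j = i1 then sa else 0) ^ 2)
          = ca ^ 2 + sa ^ 2 := by
        rw [← sum_two i0 i1 h01 (ca ^ 2) (sa ^ 2)]
        exact Finset.sum_congr rfl fun j _ => by
          by_cases h0 : j = i0 <;> by_cases h1 : j = i1 <;> simp_all
      simp only [h1]
      exact ha
    · have h1 : (∑ j : Fin n, (if j = i0 then cb else if j = i1 then sb else 0) ^ 2)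
          = cb ^ 2 + sb ^ 2 := by
        rw [← sum_two i0 i1 h01 (cb ^ 2) (sb ^ 2)]
        exact Finset.sum_congr rfl fun j _ => by
          by_cases h0 : j = i0 <;> by_cases h1 : j = i1 <;> simp_all
      simp only [h1]
      exact hb
    · have h1 : (∑ j : Fin n, (if j = i0 then cb else if j = i1 then sb else 0)
          * (if j = i0 then ca else if j = i1 then sa else 0)) = cb * ca + sb * sa := by
        rw [← sum_two i0 i1 h01 (cb * ca) (sb * sa)]
        exact Finset.sum_congr rfl fun j _ => by
          by_cases h0 : j = i0 <;> by_cases h1 : j = i1 <;> simp_all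
      simp only [h1]
      rw [hT']
      exact ht2
    · have h1 : (∑ j : Fin n, ((if j = i0 then cb else if j = i1 then sb else 0)
          * (if j = i0 then ca else if j = i1 then sa else 0)) ^ 2)
          = (cb * ca) ^ 2 + (sb * sa) ^ 2 := by
        rw [← sum_two i0 i1 h01 ((cb * ca) ^ 2) ((sb * sa) ^ 2)]
        exact Finset.sum_congr rfl fun j _ => by
          by_cases h0 : j = i0 <;> by_cases h1 : j = i1 <;> simp_all
      simp only [h1]
      nlinarith [hT', hG', ht2, hg2]
  · -- uniform-tail construction
    set i0 : Fin n := ⟨0, by omega⟩ with hi0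
    have hnpos : (0:ℝ) < (n:ℝ) := by positivity
    have hncast : (2:ℝ) ≤ (n:ℝ) := by exact_mod_cast hn
    have hn1pos : (0:ℝ) < (n:ℝ) - 1 := by linarith
    have hn2 : (0:ℝ) ≤ (n:ℝ) - 2 := by linarith
    have hc' : 2 * S ≤ T := by linarith
    have hlow' : T ≤ (n:ℝ) * S := by
      rw [div_le_iff₀ hnpos] at hlow; linarith
    have hE0 : 0 ≤ ((n:ℝ) - 1) * ((n:ℝ) * S - T) := by
      apply mul_nonneg (by linarith) (by linarith)
    obtain ⟨e, he0, he2⟩ : ∃ e : ℝ, 0 ≤ e ∧ e ^ 2 = ((n:ℝ) - 1) * ((n:ℝ) * S - T) :=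
      ⟨Real.sqrt _, Real.sqrt_nonneg _, Real.sq_sqrt hE0⟩
    have he_le : e ≤ t * ((n:ℝ) - 1) := by
      have hEle : e ^ 2 ≤ (t * ((n:ℝ) - 1)) ^ 2 := by
        rw [he2]
        have h1 : (n:ℝ) * S - T ≤ T * ((n:ℝ) - 2) / 2 := by
          nlinarith [mul_nonneg (le_of_lt hnpos) (by linarith : (0:ℝ) ≤ T - 2 * S)]
        nlinarith [ht2, mul_nonneg (mul_nonneg hT0 (by linarith : (0:ℝ) ≤ (n:ℝ) - 1)) hnpos.le]
      nlinarith [he0, mul_nonneg ht0 (by linarith : (0:ℝ) ≤ (n:ℝ) - 1)]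
    have hγ1 : -1 ≤ (2 * e - ((n:ℝ) - 2) * t) / (n:ℝ) := by
      rw [le_div_iff₀ hnpos]
      nlinarith [mul_le_of_le_one_right hn2 ht1]
    have hγ2 : (2 * e - ((n:ℝ) - 2) * t) / (n:ℝ) ≤ 1 := by
      rw [div_le_one hnpos]
      nlinarith [mul_le_of_le_one_right hnpos.le ht1]
    obtain ⟨ca, sa, cb, sb, ha, hb, hT', hG'⟩ :=
      trig_pair t ((2 * e - ((n:ℝ) - 2) * t) / (n:ℝ)) (by linarith) ht1 hγ1 hγ2
    obtain ⟨c, hcpos, hc2⟩ : ∃ c : ℝ, 0 < c ∧ c ^ 2 = (n:ℝ) - 1 :=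
      ⟨Real.sqrt _, Real.sqrt_pos.mpr hn1pos, Real.sq_sqrt hn1pos.le⟩
    have hcc : c * c = (n:ℝ) - 1 := by nlinarith [hc2]
    refine master n T S
      (fun j => if j = i0 then ca else sa / c)
      (fun j => if j = i0 then cb else sb / c)
      ?_ ?_ ?_ ?_
    · have h1 : (∑ j : Fin n, (if j = i0 then ca else sa / c) ^ 2)
          = ca ^ 2 + ((n:ℝ) - 1) * (sa / c) ^ 2 := by
        rw [← sum_unif i0 (ca ^ 2) ((sa / c) ^ 2)]
        exact Finset.sum_congr rfl fun j _ => by by_cases h0 : j = i0 <;> simp [h0]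
      simp only [h1]
      have h2 : ((n:ℝ) - 1) * (sa / c) ^ 2 = sa ^ 2 := by
        rw [div_pow, hc2]
        field_simp
      rw [h2]
      exact ha
    · have h1 : (∑ j : Fin n, (if j = i0 then cb else sb / c) ^ 2)
          = cb ^ 2 + ((n:ℝ) - 1) * (sb / c) ^ 2 := by
        rw [← sum_unif i0 (cb ^ 2) ((sb / c) ^ 2)]
        exact Finset.sum_congr rfl fun j _ => by by_cases h0 : j = i0 <;> simp [h0]
      simp only [h1]
      have h2 : ((n:ℝ) - 1) * (sb / c) ^ 2 = sb ^ 2 := by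
        rw [div_pow, hc2]
        field_simp
      rw [h2]
      exact hb
    · have h1 : (∑ j : Fin n, (if j = i0 then cb else sb / c)
          * (if j = i0 then ca else sa / c))
          = cb * ca + ((n:ℝ) - 1) * (sb / c * (sa / c)) := by
        rw [← sum_unif i0 (cb * ca) (sb / c * (sa / c))]
        exact Finset.sum_congr rfl fun j _ => by by_cases h0 : j = i0 <;> simp [h0]
      simp only [h1]
      have h2 : ((n:ℝ) - 1) * (sb / c * (sa / c)) = sb * sa := by
        rw [div_mul_div_comm, hcc, mul_div_cancel₀ _ (ne_of_gt hn1pos)]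
      rw [h2, hT']
      exact ht2
    · have h1 : (∑ j : Fin n, ((if j = i0 then cb else sb / c)
          * (if j = i0 then ca else sa / c)) ^ 2)
          = (cb * ca) ^ 2 + ((n:ℝ) - 1) * (sb / c * (sa / c)) ^ 2 := by
        rw [← sum_unif i0 ((cb * ca) ^ 2) ((sb / c * (sa / c)) ^ 2)]
        exact Finset.sum_congr rfl fun j _ => by by_cases h0 : j = i0 <;> simp [h0]
      simp only [h1]
      have h2 : ((n:ℝ) - 1) * (sb / c * (sa / c)) ^ 2 = (sb * sa) ^ 2 / ((n:ℝ) - 1) := by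
        rw [div_mul_div_comm, hcc, div_pow]
        field_simp
      rw [h2]
      exact algB (n:ℝ) t e S T (cb * ca) (sb * sa)
        (ne_of_gt hnpos) (ne_of_gt hn1pos) ht2 he2 hT' hG'
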